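/- Let m ≥ 2 be an integer and let f, L : ℝ^m → ℝ^m be maps satisfying f(L(x)) = L(2x) for all x ∈ ℝ^m. Suppose L(0) = x0, the complement ℝ^m \ L(ℝ^m) of the range of L is finite, and L is injective on some ball B(0,δ) with δ > 0. Then the set of omitted values of L equals the set of exceptional values of f with x0 removed; that is, ℝ^m \ L(ℝ^m) = { y ∈ ℝ^m : the backward orbit ⋃_{n≥1} f^{-n}(y) is a finite set } \ {x0}. -/

import Mathlib

/-- Theorem 1.5 of the paper: the omitted values of a Poincaré linearizer `L` of `f`
are exactly the exceptional values of `f` other than the fixed point `x0`. -/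
theorem omitted_eq_exceptional {m : ℕ} (hm : 2 ≤ m)
    (f L : EuclideanSpace ℝ (Fin m) → EuclideanSpace ℝ (Fin m))
    (x0 : EuclideanSpace ℝ (Fin m))
    (hfunc : ∀ x : EuclideanSpace ℝ (Fin m), f (L x) = L ((2 : ℝ) • x))
    (hL0 : L 0 = x0)
    (hfin : (Set.range L)ᶜ.Finite)
    (δ : ℝ) (hδ : 0 < δ) (hinj : Set.InjOn L (Metric.ball 0 δ)) :
    (Set.range L)ᶜ =
      {y : EuclideanSpace ℝ (Fin m) |
        (⋃ n ∈ Set.Ici 1, (f^[n]) ⁻¹' {y}).Finite} \ {x0} := by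
  have hiter : ∀ (n : ℕ) (x : EuclideanSpace ℝ (Fin m)),
      f^[n] (L x) = L (((2:ℝ)^n) • x) := by
    intro n
    induction n with
    | zero => intro x; simp
    | succ n ih =>
      intro x
      rw [Function.iterate_succ_apply', ih, hfunc, smul_smul, pow_succ, mul_comm]
  ext y
  simp only [Set.mem_compl_iff, Set.mem_range, Set.mem_diff, Set.mem_setOf_eq,
    Set.mem_singleton_iff]
  constructor
  · intro hy
    refine ⟨?_, ?_⟩
    · apply hfin.subset
      intro z hz
      simp only [Set.mem_iUnion, Set.mem_preimage, Set.mem_singleton_iff] at hz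
      obtain ⟨n, _, hzn⟩ := hz
      simp only [Set.mem_compl_iff, Set.mem_range]
      rintro ⟨x, rfl⟩
      exact hy ⟨((2:ℝ)^n) • x, by rw [← hiter n x, hzn]⟩
    · intro h
      exact hy ⟨0, hL0.trans h.symm⟩
  · rintro ⟨hfinorb, hyx0⟩ ⟨x, rfl⟩
    have hx0 : x ≠ 0 := by
      rintro rfl
      exact hyx0 hL0
    obtain ⟨N, hN⟩ := pow_unbounded_of_one_lt (‖x‖ / δ) (one_lt_two (α := ℝ))
    have hxlt : ‖x‖ < δ * 2 ^ N := by
      rw [div_lt_iff₀ hδ] at hN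
      linarith [hN]
    set p : ℕ → EuclideanSpace ℝ (Fin m) := fun k => ((1 / 2 ^ (N + k + 1) : ℝ)) • x with hp
    have hpball : ∀ k, p k ∈ Metric.ball (0 : EuclideanSpace ℝ (Fin m)) δ := by
      intro k
      have h2pos : (0:ℝ) < 2 ^ (N + k + 1) := by positivity
      rw [Metric.mem_ball, dist_zero_right, hp, norm_smul, Real.norm_eq_abs,
        abs_of_pos (by positivity)]
      rw [one_div, inv_mul_lt_iff₀ h2pos]
      calc ‖x‖ < δ * 2 ^ N := hxlt
        _ ≤ 2 ^ (N + k + 1) * δ := by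
            rw [mul_comm]
            exact mul_le_mul_of_nonneg_right
              (pow_le_pow_right₀ (by norm_num) (by omega)) hδ.le
    have hLval : ∀ k, f^[N + k + 1] (L (p k)) = L x := by
      intro k
      rw [hiter, hp, smul_smul, mul_one_div,
        div_self (by positivity : (2:ℝ) ^ (N + k + 1) ≠ 0), one_smul]
    have hmem : ∀ k, L (p k) ∈ ⋃ n ∈ Set.Ici 1, (f^[n]) ⁻¹' {L x} := by
      intro k
      simp only [Set.mem_iUnion, Set.mem_preimage, Set.mem_singleton_iff]
      exact ⟨N + k + 1, Set.mem_Ici.mpr (by omega), hLval k⟩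
    have hginj : Function.Injective fun k => L (p k) := by
      intro k l hkl
      have hpk : p k = p l := hinj (hpball k) (hpball l) hkl
      have hsc : (1 / 2 ^ (N + k + 1) : ℝ) = 1 / 2 ^ (N + l + 1) :=
        smul_left_injective ℝ hx0 hpk
      rw [one_div, one_div, inv_inj] at hsc
      have := pow_right_injective₀ (by norm_num : (0:ℝ) < 2) (by norm_num : (2:ℝ) ≠ 1) hsc
      omega
    exact (Set.infinite_of_injective_forall_mem hginj hmem) hfinorb
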